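/- Special right decomposition for δ-separation: for any directed graph G = (V,E) and any subsets A, B, C ⊆ V and D ⊆ B, if C δ-separates A from B in G (A ir_δ B | C), then (C ∪ B) \ D δ-separates A from D in G (A ir_δ D | (C ∪ B) \ D). -/

import Mathlib

open Set

variable {V : Type*}

/-- There is a directed path (a sequence of ≥ 2 distinct vertices joined by
directed edges) from `v` to `w`; i.e. `v` is an ancestor of `w`. -/
def DirPathConn (E : V → V → Prop) (v w : V) : Prop :=
  ∃ l : List V, l.Chain' E ∧ l.Nodup ∧ 2 ≤ l.length ∧
    l.head? = some v ∧ l.getLast? = some w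

/-- `an(A)`: vertices outside `A` that are ancestors of some element of `A`. -/
def anSet (E : V → V → Prop) (A : Set V) : Set V :=
  {v | v ∉ A ∧ ∃ a ∈ A, DirPathConn E v a}

/-- `An(A) = A ∪ an(A)`, the smallest ancestral set containing `A`. -/
def AnSet (E : V → V → Prop) (A : Set V) : Set V := A ∪ anSet E A

/-- `pa(A)`: parents of `A` outside of `A`. -/
def paSet (E : V → V → Prop) (A : Set V) : Set V :=
  {v | v ∉ A ∧ ∃ a ∈ A, E v a}

/-- `cl(A) = A ∪ pa(A)`, the closure of `A`. -/
def clSet (E : V → V → Prop) (A : Set V) : Set V := A ∪ paSet E A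

/-- The induced subgraph `G_A` (as an edge relation on `V` supported on `A`). -/
def inducedGraph (E : V → V → Prop) (A : Set V) : V → V → Prop :=
  fun j k => E j k ∧ j ∈ A ∧ k ∈ A

/-- `G^B`: delete from `G` every directed edge starting in `B`. -/
def delOut (E : V → V → Prop) (B : Set V) : V → V → Prop :=
  fun j k => E j k ∧ j ∉ B

/-- The moral graph `G^m`: distinct `j, k` are adjacent iff they are joined by
an edge in some direction or have a common child. -/
def moralGraph (E : V → V → Prop) : V → V → Prop :=
  fun j k => j ≠ k ∧ (E j k ∨ E k j ∨ ∃ c, E j c ∧ E k c)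

/-- `l` is an undirected path from `v` to `w` in the undirected graph `H`:
a sequence of ≥ 2 distinct vertices, consecutive ones adjacent. -/
def IsUPath (H : V → V → Prop) (l : List V) (v w : V) : Prop :=
  l.Chain' H ∧ l.Nodup ∧ 2 ≤ l.length ∧
    l.head? = some v ∧ l.getLast? = some w

/-- `A ⊥_g B | C` in the undirected graph `H`: every path from a vertex of `A`
to a vertex of `B` contains a vertex of `C`. -/
def uSep (H : V → V → Prop) (A B C : Set V) : Prop :=
  ∀ v ∈ A, ∀ w ∈ B, ∀ l : List V, IsUPath H l v w → ∃ c ∈ C, c ∈ l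

/-- δ-separation for pairwise disjoint `A, B, C`: `A ⊥_g B | C` in the moral
graph of the subgraph of `G^B` induced by `An(A ∪ B ∪ C)`. -/
def deltaSepDisjoint (E : V → V → Prop) (A B C : Set V) : Prop :=
  uSep (moralGraph (inducedGraph (delOut E B) (AnSet E (A ∪ B ∪ C)))) A B C

/-- δ-separation `A ir_δ B | C` for general (not necessarily disjoint) sets:
`C \ B` δ-separates `A \ (B ∪ C)` from `B`. -/
def deltaSep (E : V → V → Prop) (A B C : Set V) : Prop :=
  deltaSepDisjoint E (A \ (B ∪ C)) B (C \ B)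


private lemma moral_edge_convert {V : Type*} (E : V → V → Prop) (S B D : Set V)
    (x y : V) (hx : x ∉ B) (hy : y ∉ B ∨ y ∈ D) :
    moralGraph (inducedGraph (delOut E D) S) x y →
    moralGraph (inducedGraph (delOut E B) S) x y := by
  rintro ⟨hne, (⟨⟨hxy, hxD⟩, hxS, hyS⟩ | ⟨⟨hyx, hyD⟩, hyS, hxS⟩ |
    ⟨c, ⟨⟨hxc, hxD⟩, hxS, hcS⟩, ⟨⟨hyc, hyD⟩, hyS, hcS'⟩⟩)⟩
  · exact ⟨hne, Or.inl ⟨⟨hxy, hx⟩, hxS, hyS⟩⟩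
  · rcases hy with hyB | hyD'
    · exact ⟨hne, Or.inr (Or.inl ⟨⟨hyx, hyB⟩, hyS, hxS⟩)⟩
    · exact absurd hyD' hyD
  · rcases hy with hyB | hyD'
    · exact ⟨hne, Or.inr (Or.inr ⟨c, ⟨⟨hxc, hx⟩, hxS, hcS⟩, ⟨⟨hyc, hyB⟩, hyS, hcS'⟩⟩)⟩
    · exact absurd hyD' hyD

/-- Special right decomposition for δ-separation. -/
theorem deltaSep_special_right_decomposition [Fintype V] (E : V → V → Prop)
    (hE : ∀ j k, E j k → j ≠ k) (A B C D : Set V) (hDB : D ⊆ B)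
    (h : deltaSep E A B C) : deltaSep E A D ((C ∪ B) \ D) := by
  classical
  unfold deltaSep deltaSepDisjoint at h ⊢
  have hU : (A \ (B ∪ C)) ∪ B ∪ (C \ B)
      = (A \ (D ∪ (C ∪ B) \ D)) ∪ D ∪ (((C ∪ B) \ D) \ D) := by
    ext x
    have hx : x ∈ D → x ∈ B := fun hh => hDB hh
    simp only [Set.mem_union, Set.mem_diff]
    tauto
  rw [hU] at h
  set S := AnSet E ((A \ (D ∪ (C ∪ B) \ D)) ∪ D ∪ (((C ∪ B) \ D) \ D)) with hS
  intro v hv w hw l hl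
  by_contra hcon
  push_neg at hcon
  obtain ⟨hch, hnd, hlen, hhead, hlast⟩ := hl
  have hlpos : 0 < l.length := by omega
  have hv0 : l[0] = v := by
    rw [List.head?_eq_getElem?, List.getElem?_eq_getElem hlpos] at hhead
    exact Option.some.inj hhead
  have hwlast : l[l.length - 1] = w := by
    rw [List.getLast?_eq_getElem?, List.getElem?_eq_getElem (by omega)] at hlast
    exact Option.some.inj hlast
  have hvCB : v ∉ C ∪ B := by
    intro hmem
    by_cases hvD : v ∈ D
    · exact hv.2 (Or.inl hvD)
    · exact hv.2 (Or.inr ⟨hmem, hvD⟩)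
  have hvB : v ∉ B := fun hh => hvCB (Set.mem_union_right _ hh)
  have hPex : ∃ i, ∃ hi : i < l.length, l[i] ∈ B :=
    ⟨l.length - 1, by omega, by rw [hwlast]; exact hDB hw⟩
  have key : ∃ n, ∃ hn : n < l.length, l[n] ∈ B ∧
      ∀ i, i < n → ∀ hi : i < l.length, l[i] ∉ B := by
    obtain ⟨hlt0, hB0⟩ := Nat.find_spec hPex
    exact ⟨Nat.find hPex, hlt0, hB0, fun i hi hilt hiB => Nat.find_min hPex hi ⟨hilt, hiB⟩⟩
  obtain ⟨n, hnlt, hnB, hmin⟩ := key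
  have hn1 : 1 ≤ n := by
    rcases Nat.eq_zero_or_pos n with h0 | h1
    · exfalso; apply hvB; rw [← hv0]; subst h0; exact hnB
    · exact h1
  have hnD : l[n] ∈ D := by
    by_contra hnotD
    exact hcon l[n] ⟨⟨Set.mem_union_right _ hnB, hnotD⟩, hnotD⟩ (List.getElem_mem hnlt)
  set l' := l.take (n + 1) with hl'
  have hlen' : l'.length = n + 1 := by
    rw [hl', List.length_take]; omega
  have hget' : ∀ i (hi : i < n + 1), l'[i]'(by omega) = l[i]'(by omega) := by
    intro i hi
    simp [hl', List.getElem_take]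
  have hchain' : List.Chain' (moralGraph (inducedGraph (delOut E B) S)) l' := by
    refine List.isChain_iff_getElem.mpr ?_
    intro i hilt
    rw [hlen'] at hilt
    rw [hget' i (by omega), hget' (i + 1) (by omega)]
    have hH2 : moralGraph (inducedGraph (delOut E D) S) (l[i]'(by omega)) (l[i+1]'(by omega)) := by
      have := (List.isChain_iff_getElem.mp hch) i (by omega)
      simpa using this
    refine moral_edge_convert E S B D _ _ (hmin i (by omega) (by omega)) ?_ hH2
    rcases Nat.lt_or_ge (i + 1) n with hlt | hge
    · exact Or.inl (hmin (i + 1) hlt (by omega))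
    · obtain rfl : n = i + 1 := by omega
      exact Or.inr hnD
  have hpath : IsUPath (moralGraph (inducedGraph (delOut E B) S)) l' v l[n] := by
    refine ⟨hchain', (List.take_sublist _ _).nodup hnd, by omega, ?_, ?_⟩
    · rw [List.head?_eq_getElem?, List.getElem?_eq_getElem (by omega)]
      rw [hget' 0 (by omega), hv0]
    · rw [List.getLast?_eq_getElem?, hlen', List.getElem?_eq_getElem (by omega)]
      simp only [Nat.add_sub_cancel]
      rw [hget' n (by omega)]
  have hvA : v ∈ A \ (B ∪ C) := ⟨hv.1, fun hh => hvCB (Set.union_comm B C ▸ hh)⟩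
  obtain ⟨c, hcCB, hcl'⟩ := h v hvA l[n] hnB l' hpath
  have hcB : c ∉ B := hcCB.2
  have hcD : c ∉ D := fun hh => hcB (hDB hh)
  exact hcon c ⟨⟨Set.mem_union_left _ hcCB.1, hcD⟩, hcD⟩ ((List.take_sublist _ _).subset hcl')
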